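/- arXiv:1612.08138 — 4 statements merged into one kernel-verified Lean document; each statement's English description precedes it below -/
import Mathlib

section
/- Let 𝔽 be a poset (of forests, ordered by inclusion), let P : 𝔽 → 𝔽 be a forest projection and let 𝒢 assign to each element of 𝔽 a finite set of 'cuts', such that P and 𝒢 are compatible: for every interval M in the image structure of P, every cut e ∈ 𝒢(b(M)), and every cut set 𝒞, one has 𝒞 ∪ {e} ∈ 𝔠^P(M) if and only if 𝒞 \ {e} ∈ 𝔠^P(M), where 𝔠^P(M) = {𝒞 : P⁻¹_𝒞[s(M)] = M}. Then for each such interval M, the collection of intervals of cut sets 𝔊(M) = {[𝒞, 𝒞 ⊔ 𝒢(b(M))] : 𝒞 ∈ 𝔠^P(M), 𝒞 ∩ 𝒢(b(M)) = ∅} forms a partition of 𝔠^P(M). -/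
variable {F E : Type*}

/-- `P⁻¹_𝒞[S] = P⁻¹[S] ∩ 𝔽_𝒞`, the preimage of `S` restricted to the forests
compatible with the cut set `𝒞`. -/
def PinvC (P : F → F) (compat : Set E → Set F) (C : Set E) (S : F) : Set F :=
  P ⁻¹' {S} ∩ compat C

/-- `𝔠^P(M) = {𝒞 : P⁻¹_𝒞[s(M)] = M}`, the cut sets generating the interval `M`. -/
def cutsGenerating (P : F → F) (compat : Set E → Set F) (sM : F) (M : Set F) :
    Set (Set E) :=
  {C : Set E | PinvC P compat C sM = M}

/-- The family of intervals of cut sets `[𝒞, 𝒞 ⊔ G₀]` with `𝒞 ∈ Q`, `𝒞 ∩ G₀ = ∅`. -/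
def cutIntervals (Q : Set (Set E)) (G₀ : Set E) : Set (Set (Set E)) :=
  {I : Set (Set E) | ∃ C ∈ Q, C ∩ G₀ = ∅ ∧ I = Set.Icc C (C ∪ G₀)}

/-- If the forest projection `P` and the cut rule `𝒢` are compatible
(adding or removing a cut `e ∈ 𝒢(b(M))` does not change membership in `𝔠^P(M)`), then
for each interval `M = [s(M), b(M)]` arising from `P`, the collection of intervals of
cut sets `𝔊(M) = {[𝒞, 𝒞 ⊔ 𝒢(b(M))] : 𝒞 ∈ 𝔠^P(M), 𝒞 ∩ 𝒢(b(M)) = ∅}` forms a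
partition of `𝔠^P(M)`: its members are nonempty subsets of `𝔠^P(M)`, pairwise
disjoint, and their union is all of `𝔠^P(M)`. -/
theorem compatible_cut_intervals_partition [PartialOrder F]
    (P : F → F) (compat : Set E → Set F) (𝒢 : F → Set E)
    (h𝒢fin : ∀ S : F, (𝒢 S).Finite)
    (sM bM : F) (hle : sM ≤ bM) (M : Set F) (hM : M = Set.Icc sM bM)
    (hMne : M.Nonempty) (hMmem : ∃ C : Set E, PinvC P compat C sM = M)
    (hcompat : ∀ e ∈ 𝒢 bM, ∀ C : Set E,
      (C ∪ {e} ∈ cutsGenerating P compat sM M ↔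
        C \ {e} ∈ cutsGenerating P compat sM M)) :
    (∀ I ∈ cutIntervals (cutsGenerating P compat sM M) (𝒢 bM),
        I.Nonempty ∧ I ⊆ cutsGenerating P compat sM M) ∧
      (cutIntervals (cutsGenerating P compat sM M) (𝒢 bM)).PairwiseDisjoint id ∧
      ⋃₀ cutIntervals (cutsGenerating P compat sM M) (𝒢 bM)
        = cutsGenerating P compat sM M := by

  classical
  set Q := cutsGenerating P compat sM M with hQ
  set G := 𝒢 bM with hG
  -- single-element invariance
  have hsingle : ∀ e ∈ G, ∀ C : Set E, (C ∈ Q ↔ C \ {e} ∈ Q) := by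
    intro e he C
    by_cases hc : e ∈ C
    · have h := hcompat e he C
      rwa [Set.union_eq_self_of_subset_right (by simpa using hc)] at h
    · rw [Set.diff_singleton_eq_self hc]
  -- invariance under removing all of G
  have hkey : ∀ C : Set E, (C ∈ Q ↔ C \ G ∈ Q) := by
    refine Set.Finite.induction_on_subset (motive := fun A _ => ∀ C : Set E, (C ∈ Q ↔ C \ A ∈ Q)) _
      (h𝒢fin bM) (fun C => by simp) ?_
    intro a s haG hsG has ih C
    have heq : C \ insert a s = (C \ s) \ {a} := by
      rw [Set.diff_diff]
      congr 1
      ext x; simp [or_comm]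
    rw [heq]
    exact (ih C).trans (hsingle a haG (C \ s))
  -- extracting C from an element of its interval
  have hext : ∀ C D : Set E, C ∩ G = ∅ → D ∈ Set.Icc C (C ∪ G) → D \ G = C := by
    intro C D hCG ⟨h1, h2⟩
    apply Set.Subset.antisymm
    · intro x hx
      rcases h2 hx.1 with h | h
      · exact h
      · exact absurd h hx.2
    · intro x hx
      exact ⟨h1 hx, fun hxG => (Set.eq_empty_iff_forall_notMem.mp hCG x) ⟨hx, hxG⟩⟩
  refine ⟨?_, ?_, ?_⟩
  · rintro I ⟨C, hCQ, hCG, rfl⟩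
    refine ⟨⟨C, le_refl C, Set.subset_union_left⟩, fun D hD => ?_⟩
    have : D \ G = C := hext C D hCG hD
    exact (hkey D).mpr (this ▸ hCQ)
  · rintro I ⟨C, hCQ, hCG, rfl⟩ J ⟨C', hC'Q, hC'G, rfl⟩ hne
    refine Set.disjoint_left.mpr fun D hD hD' => hne ?_
    have h1 := hext C D hCG hD
    have h2 := hext C' D hC'G hD'
    rw [h1.symm.trans h2]
  · ext D
    constructor
    · rintro ⟨I, ⟨C, hCQ, hCG, rfl⟩, hD⟩
      have : D \ G = C := hext C D hCG hD
      exact (hkey D).mpr (this ▸ hCQ)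
    · intro hD
      refine ⟨Set.Icc (D \ G) ((D \ G) ∪ G), ⟨D \ G, (hkey D).mp hD, ?_, rfl⟩, ?_, ?_⟩
      · exact Set.diff_inter_self
      · exact Set.diff_subset
      · intro x hx
        by_cases hxG : x ∈ G
        · exact Or.inr hxG
        · exact Or.inl ⟨hx, hxG⟩
end

section
/- Fix a scale assignment n : E → ℕ on a finite edge set E of an ambient tree, and for a forest ℱ of divergent subtrees and a subtree S ∈ ℱ, define int^n_ℱ(S) as the minimum of n over internal edges of S not internal to children of S in ℱ, and ext^n_ℱ(S) as the maximum of n over external edges of S internal to the immediate ancestor of S in ℱ. Define P^n[ℱ] = {S ∈ ℱ : int^n_ℱ(S) ≤ ext^n_ℱ(S)}. Then for every S ∈ ℱ, one has int^n_ℱ(S) = int^n_{P^n[ℱ]}(S) and ext^n_ℱ(S) = ext^n_{P^n[ℱ]}(S). -/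
variable {V ε : Type*}

/-- `ℰ^int(S)`: edges with all endpoints in the node set `S`. -/
def Eint (inc : ε → Set V) (S : Set V) : Set ε := {e | inc e ⊆ S}

/-- `ℰ^ext(S)`: edges touching but not inside `S`. -/
def Eext (inc : ε → Set V) (S : Set V) : Set ε :=
  {e | ¬ inc e ⊆ S ∧ (inc e ∩ S).Nonempty}

/-- `C_ℱ(S)`: the maximal elements of `ℱ` strictly contained in `S`. -/
def childrenF (F : Set (Set V)) (S : Set V) : Set (Set V) :=
  {T | T ∈ F ∧ T ⊂ S ∧ ∀ U ∈ F, T ⊂ U → ¬ U ⊂ S}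

/-- `ℰ^int_ℱ(S) = ℰ^int(S) \ ⋃_{T ∈ C_ℱ(S)} ℰ^int(T)`. -/
def EintF (inc : ε → Set V) (F : Set (Set V)) (S : Set V) : Set ε :=
  Eint inc S \ ⋃ T ∈ childrenF F S, Eint inc T

/-- `ℰ^ext_ℱ(S) = ℰ^ext(S) ∩ ℰ^int(A_ℱ(S))`, where `A_ℱ(S)` is the minimal element of
`ℱ` strictly containing `S` (the intersection over all strict supersets in `ℱ`,
which for a laminar finite family equals `ℰ^int` of the immediate ancestor, and is
everything when there is no ancestor). -/
def EextF (inc : ε → Set V) (F : Set (Set V)) (S : Set V) : Set ε :=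
  Eext inc S ∩ ⋂ T ∈ {T | T ∈ F ∧ S ⊂ T}, Eint inc T

/-- `int^n_ℱ(S)`: the minimum scale over internal edges modulo `ℱ`. -/
noncomputable def intScale (inc : ε → Set V) (n : ε → ℕ) (F : Set (Set V))
    (S : Set V) : ℕ :=
  sInf (n '' EintF inc F S)

/-- `ext^n_ℱ(S)`: the maximum scale over external edges modulo `ℱ`. -/
noncomputable def extScale (inc : ε → Set V) (n : ε → ℕ) (F : Set (Set V))
    (S : Set V) : ℕ :=
  sSup (n '' EextF inc F S)

/-- `P^n[ℱ]`: the projection onto safe forests. -/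
noncomputable def safeProj (inc : ε → Set V) (n : ε → ℕ) (F : Set (Set V)) :
    Set (Set V) :=
  {S ∈ F | intScale inc n F S ≤ extScale inc n F S}

section Aux

variable {inc : ε → Set V} {n : ε → ℕ} {F : Set (Set V)}

lemma Eint_mono (inc : ε → Set V) {S T : Set V} (h : S ⊆ T) :
    Eint inc S ⊆ Eint inc T := fun _ he => Set.Subset.trans he h

lemma mem_nonempty (hext : ∀ S ∈ F, (Eext inc S).Nonempty) {S : Set V}
    (hS : S ∈ F) : S.Nonempty := by
  obtain ⟨e, he⟩ := hext S hS
  obtain ⟨v, hv⟩ := he.2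
  exact ⟨v, hv.2⟩

lemma sup_chain (hlam : ∀ S ∈ F, ∀ T ∈ F, S ⊆ T ∨ T ⊆ S ∨ S ∩ T = ∅)
    {S T T' : Set V} (hS : S.Nonempty) (hT : T ∈ F) (hT' : T' ∈ F)
    (h1 : S ⊆ T) (h2 : S ⊆ T') : T ⊆ T' ∨ T' ⊆ T := by
  rcases hlam T hT T' hT' with h | h | h
  · exact Or.inl h
  · exact Or.inr h
  · exfalso
    obtain ⟨v, hv⟩ := hS
    have : v ∈ T ∩ T' := ⟨h1 hv, h2 hv⟩
    simp [h] at this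

lemma exists_minAncestor (hFfin : F.Finite)
    (hlam : ∀ S ∈ F, ∀ T ∈ F, S ⊆ T ∨ T ⊆ S ∨ S ∩ T = ∅)
    (hS : (S : Set V).Nonempty)
    (hne : ∃ T ∈ F, S ⊂ T) :
    ∃ A ∈ F, S ⊂ A ∧ ∀ T ∈ F, S ⊂ T → A ⊆ T := by
  have hfin : {T | T ∈ F ∧ S ⊂ T}.Finite := hFfin.subset (fun T hT => hT.1)
  obtain ⟨A, hA, hmin⟩ : ∃ A ∈ {T | T ∈ F ∧ S ⊂ T}, ∀ T ∈ {T | T ∈ F ∧ S ⊂ T}, id T ≤ id A → id A = id T := by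
    obtain ⟨A, hA, hmin⟩ := hfin.exists_minimalFor id _ hne
    exact ⟨A, hA, fun T hT h => le_antisymm (hmin hT h) h⟩
  refine ⟨A, hA.1, hA.2, fun T hT hST => ?_⟩
  rcases sup_chain hlam hS hA.1 hT hA.2.subset hST.subset with h | h
  · exact h
  · exact le_of_eq (hmin T ⟨hT, hST⟩ h)

lemma EextF_eq_of_minAncestor {S A : Set V} (hA : A ∈ F) (hSA : S ⊂ A)
    (hmin : ∀ T ∈ F, S ⊂ T → A ⊆ T) :
    EextF inc F S = Eext inc S ∩ Eint inc A := by
  unfold EextF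
  congr 1
  apply subset_antisymm
  · exact Set.biInter_subset_of_mem (show A ∈ {T | T ∈ F ∧ S ⊂ T} from ⟨hA, hSA⟩)
  · intro e he
    rw [Set.mem_iInter₂]
    intro T hT
    exact Eint_mono inc (hmin T hT.1 hT.2) he

lemma exists_child (hFfin : F.Finite) {S T : Set V} (hT : T ∈ F) (hTS : T ⊂ S) :
    ∃ U ∈ childrenF F S, T ⊆ U := by
  have hfin : {U | U ∈ F ∧ T ⊆ U ∧ U ⊂ S}.Finite := hFfin.subset fun U hU => hU.1
  obtain ⟨U, hU, hmax⟩ : ∃ U ∈ {U | U ∈ F ∧ T ⊆ U ∧ U ⊂ S}, ∀ W ∈ {U | U ∈ F ∧ T ⊆ U ∧ U ⊂ S}, id U ≤ id W → id U = id W := by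
    obtain ⟨U, hU, hmax⟩ := hfin.exists_maximalFor id _ ⟨T, hT, subset_rfl, hTS⟩
    exact ⟨U, hU, fun W hW h => le_antisymm h (hmax hW h)⟩
  refine ⟨U, ⟨hU.1, hU.2.2, fun W hW hUW hWS => ?_⟩, hU.2.1⟩
  have : U = W := hmax W ⟨hW, hU.2.1.trans hUW.subset, hWS⟩ hUW.subset
  exact hUW.ne this

lemma children_disjoint (hlam : ∀ S ∈ F, ∀ T ∈ F, S ⊆ T ∨ T ⊆ S ∨ S ∩ T = ∅)
    {S T T' : Set V} (hT : T ∈ childrenF F S) (hT' : T' ∈ childrenF F S)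
    (hne : T ≠ T') : T ∩ T' = ∅ := by
  rcases hlam T hT.1 T' hT'.1 with h | h | h
  · rcases h.eq_or_ssubset with h | h
    · exact absurd h hne
    · exact absurd hT'.2.1 (hT.2.2 T' hT'.1 h)
  · rcases h.eq_or_ssubset with h | h
    · exact absurd h.symm hne
    · exact absurd hT.2.1 (hT'.2.2 T hT.1 h)
  · exact h

lemma cross_subset_EintF (hlam : ∀ S ∈ F, ∀ T ∈ F, S ⊆ T ∨ T ⊆ S ∨ S ∩ T = ∅)
    {S T : Set V} (hT : T ∈ childrenF F S) :
    Eext inc T ∩ Eint inc S ⊆ EintF inc F S := by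
  rintro e ⟨⟨hni, hne⟩, hin⟩
  refine ⟨hin, ?_⟩
  intro hmem
  simp only [Set.mem_iUnion, exists_prop] at hmem
  obtain ⟨T', hT', he'⟩ := hmem
  by_cases h : T' = T
  · exact hni (h ▸ he')
  · have hd := children_disjoint hlam hT' hT h
    obtain ⟨v, hv⟩ := hne
    have : v ∈ T' ∩ T := ⟨he' hv.1, hv.2⟩
    simp [hd] at this

lemma EextF_child_subset (hlam : ∀ S ∈ F, ∀ T ∈ F, S ⊆ T ∨ T ⊆ S ∨ S ∩ T = ∅)
    {S T : Set V} (hS : S ∈ F) (hT : T ∈ childrenF F S) :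
    EextF inc F T ⊆ EintF inc F S := by
  rintro e ⟨he1, he2⟩
  have heS : e ∈ Eint inc S :=
    Set.mem_iInter₂.mp he2 S (show S ∈ {U | U ∈ F ∧ T ⊂ U} from ⟨hS, hT.2.1⟩)
  exact cross_subset_EintF hlam hT ⟨he1, heS⟩

lemma EextF_nonempty (hFfin : F.Finite)
    (hlam : ∀ S ∈ F, ∀ T ∈ F, S ⊆ T ∨ T ⊆ S ∨ S ∩ T = ∅)
    (hcross : ∀ S ∈ F, ∀ T ∈ F, S ⊂ T → (Eext inc S ∩ Eint inc T).Nonempty)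
    (hext : ∀ S ∈ F, (Eext inc S).Nonempty)
    {S : Set V} (hS : S ∈ F) : (EextF inc F S).Nonempty := by
  by_cases h : ∃ T ∈ F, S ⊂ T
  · obtain ⟨A, hA, hSA, hmin⟩ :=
      exists_minAncestor hFfin hlam (mem_nonempty hext hS) h
    rw [EextF_eq_of_minAncestor hA hSA hmin]
    exact hcross S hS A hA hSA
  · have : {T | T ∈ F ∧ S ⊂ T} = ∅ := by
      ext T; simp only [Set.mem_setOf_eq, Set.mem_empty_iff_false, iff_false]
      rintro ⟨h1, h2⟩; exact h ⟨T, h1, h2⟩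
    have heq : EextF inc F S = Eext inc S := by
      unfold EextF
      rw [this]
      simp
    rw [heq]
    exact hext S hS

lemma EintF_nonempty_of_child
    (hlam : ∀ S ∈ F, ∀ T ∈ F, S ⊆ T ∨ T ⊆ S ∨ S ∩ T = ∅)
    (hcross : ∀ S ∈ F, ∀ T ∈ F, S ⊂ T → (Eext inc S ∩ Eint inc T).Nonempty)
    {S T : Set V} (hS : S ∈ F) (hT : T ∈ childrenF F S) :
    (EintF inc F S).Nonempty := by
  obtain ⟨e, he⟩ := hcross T hT.1 S hS hT.2.1
  exact ⟨e, cross_subset_EintF hlam hT he⟩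

lemma bddAbove_scales [Finite ε] (s : Set ε) : BddAbove (n '' s) :=
  ((Set.toFinite s).image n).bddAbove

lemma int_le_ext [Finite ε] (hFfin : F.Finite)
    (hlam : ∀ S ∈ F, ∀ T ∈ F, S ⊆ T ∨ T ⊆ S ∨ S ∩ T = ∅)
    (hcross : ∀ S ∈ F, ∀ T ∈ F, S ⊂ T → (Eext inc S ∩ Eint inc T).Nonempty)
    (hext : ∀ S ∈ F, (Eext inc S).Nonempty)
    {S T : Set V} (hS : S ∈ F) (hT : T ∈ childrenF F S) :
    intScale inc n F S ≤ extScale inc n F T := by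
  obtain ⟨e, he⟩ := EextF_nonempty hFfin hlam hcross hext hT.1
  have h1 : intScale inc n F S ≤ n e :=
    Nat.sInf_le ⟨e, EextF_child_subset hlam hS hT he, rfl⟩
  have h2 : n e ≤ extScale inc n F T :=
    le_csSup (bddAbove_scales _) ⟨e, he, rfl⟩
  exact h1.trans h2

lemma not_safe {S : Set V} (hS : S ∈ F) (h : S ∉ safeProj inc n F) :
    extScale inc n F S < intScale inc n F S := by
  by_contra hc
  exact h ⟨hS, not_lt.mp hc⟩

lemma claimI [Finite ε] (hFfin : F.Finite)
    (hlam : ∀ S ∈ F, ∀ T ∈ F, S ⊆ T ∨ T ⊆ S ∨ S ∩ T = ∅)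
    (hcross : ∀ S ∈ F, ∀ T ∈ F, S ⊂ T → (Eext inc S ∩ Eint inc T).Nonempty)
    (hext : ∀ S ∈ F, (Eext inc S).Nonempty) (n : ε → ℕ) :
    ∀ (k : ℕ) (T : Set V), T ∈ F → ({U | U ∈ F ∧ U ⊆ T}).ncard ≤ k →
    ∀ e, e ∈ Eint inc T →
    (∀ U ∈ F, U ⊆ T → e ∈ Eint inc U → U ∉ safeProj inc n F) →
    extScale inc n F T < n e := by
  intro k
  induction k with
  | zero =>
    intro T hT hcard
    exfalso
    have hfin : ({U | U ∈ F ∧ U ⊆ T}).Finite := hFfin.subset fun U hU => hU.1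
    have : 0 < ({U | U ∈ F ∧ U ⊆ T}).ncard :=
      (Set.ncard_pos hfin).mpr ⟨T, hT, subset_rfl⟩
    omega
  | succ k ih =>
    intro T hT hcard e he hU
    have hTsafe : extScale inc n F T < intScale inc n F T :=
      not_safe hT (hU T hT subset_rfl he)
    by_cases hm : e ∈ EintF inc F T
    · have : intScale inc n F T ≤ n e := Nat.sInf_le ⟨e, hm, rfl⟩
      omega
    · have hch : ∃ T' ∈ childrenF F T, e ∈ Eint inc T' := by
        by_contra h
        apply hm
        refine ⟨he, fun hmem => ?_⟩
        simp only [Set.mem_iUnion, exists_prop] at hmem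
        obtain ⟨T', h1, h2⟩ := hmem
        exact h ⟨T', h1, h2⟩
      obtain ⟨T', hT', he'⟩ := hch
      have hsub : T' ⊂ T := hT'.2.1
      have hcard' : ({U | U ∈ F ∧ U ⊆ T'}).ncard ≤ k := by
        have hlt : {U | U ∈ F ∧ U ⊆ T'} ⊂ {U | U ∈ F ∧ U ⊆ T} := by
          constructor
          · intro U hUm
            exact ⟨hUm.1, hUm.2.trans hsub.subset⟩
          · intro hcontra
            have : T ∈ {U | U ∈ F ∧ U ⊆ T'} := hcontra ⟨hT, subset_rfl⟩
            exact (this.2.trans_ssubset hsub).ne rfl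
        have := Set.ncard_lt_ncard hlt (hFfin.subset fun U hUm => hUm.1)
        omega
      have h1 := ih T' hT'.1 hcard' e he'
        (fun U hUF hUT' heU => hU U hUF (hUT'.trans hsub.subset) heU)
      have h2 : intScale inc n F T ≤ extScale inc n F T' :=
        int_le_ext hFfin hlam hcross hext hT hT'
      omega

lemma claimII [Finite ε] (hFfin : F.Finite)
    (hlam : ∀ S ∈ F, ∀ T ∈ F, S ⊆ T ∨ T ⊆ S ∨ S ∩ T = ∅)
    (hcross : ∀ S ∈ F, ∀ T ∈ F, S ⊂ T → (Eext inc S ∩ Eint inc T).Nonempty)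
    (hext : ∀ S ∈ F, (Eext inc S).Nonempty) (n : ε → ℕ) :
    ∀ (k : ℕ) (T : Set V), T ∈ F → ({U | U ∈ F ∧ T ⊆ U}).ncard ≤ k →
    ∀ e, e ∈ Eext inc T →
    (∀ U ∈ F, T ⊆ U → e ∈ Eext inc U → U ∉ safeProj inc n F) →
    n e < intScale inc n F T := by
  intro k
  induction k with
  | zero =>
    intro T hT hcard
    exfalso
    have hfin : ({U | U ∈ F ∧ T ⊆ U}).Finite := hFfin.subset fun U hU => hU.1
    have : 0 < ({U | U ∈ F ∧ T ⊆ U}).ncard :=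
      (Set.ncard_pos hfin).mpr ⟨T, hT, subset_rfl⟩
    omega
  | succ k ih =>
    intro T hT hcard e he hU
    have hTsafe : extScale inc n F T < intScale inc n F T :=
      not_safe hT (hU T hT subset_rfl he)
    by_cases hm : e ∈ EextF inc F T
    · have : n e ≤ extScale inc n F T :=
        le_csSup (bddAbove_scales _) ⟨e, hm, rfl⟩
      omega
    · have hanc : ∃ T₀ ∈ F, T ⊂ T₀ ∧ e ∉ Eint inc T₀ := by
        by_contra h
        push_neg at h
        apply hm
        refine ⟨he, ?_⟩
        rw [Set.mem_iInter₂]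
        intro U hUm
        exact h U hUm.1 hUm.2
      obtain ⟨T₀, hT₀, hTT₀, heT₀⟩ := hanc
      obtain ⟨B, hB, hTB, hBmin⟩ :=
        exists_minAncestor hFfin hlam (mem_nonempty hext hT) ⟨T₀, hT₀, hTT₀⟩
      have heB : e ∉ Eint inc B := fun h => heT₀ (Eint_mono inc (hBmin T₀ hT₀ hTT₀) h)
      have heBext : e ∈ Eext inc B := by
        refine ⟨heB, ?_⟩
        obtain ⟨v, hv⟩ := he.2
        exact ⟨v, hv.1, hTB.subset hv.2⟩
      have hTchild : T ∈ childrenF F B := by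
        refine ⟨hT, hTB, fun W hW hTW hWB => ?_⟩
        exact (hBmin W hW hTW).trans_ssubset hWB |>.ne rfl
      have hcard' : ({U | U ∈ F ∧ B ⊆ U}).ncard ≤ k := by
        have hlt : {U | U ∈ F ∧ B ⊆ U} ⊂ {U | U ∈ F ∧ T ⊆ U} := by
          constructor
          · intro U hUm
            exact ⟨hUm.1, hTB.subset.trans hUm.2⟩
          · intro hcontra
            have : T ∈ {U | U ∈ F ∧ B ⊆ U} := hcontra ⟨hT, subset_rfl⟩
            exact (this.2.trans_ssubset hTB).ne rfl
        have := Set.ncard_lt_ncard hlt (hFfin.subset fun U hUm => hUm.1)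
        omega
      have h1 := ih B hB hcard' e heBext
        (fun U hUF hUB heU => hU U hUF (hTB.subset.trans hUB) heU)
      have h2 : intScale inc n F B ≤ extScale inc n F T :=
        int_le_ext hFfin hlam hcross hext hB hTchild
      omega

end Aux


/-- main classification lemma. For every `S ∈ ℱ` one has
`int^n_ℱ(S) = int^n_{P^n[ℱ]}(S)` and `ext^n_ℱ(S) = ext^n_{P^n[ℱ]}(S)`.
The ambient tree structure enters through: laminarity of `ℱ`, the fact that a proper
subtree has an external edge internal to any strictly larger subtree (`hcross`), and
the fact that every subtree has some external edge (`hext`). -/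
theorem safeProj_classification [Finite ε] (inc : ε → Set V) (n : ε → ℕ)
    (F : Set (Set V)) (hFfin : F.Finite)
    (hlam : ∀ S ∈ F, ∀ T ∈ F, S ⊆ T ∨ T ⊆ S ∨ S ∩ T = ∅)
    (hcross : ∀ S ∈ F, ∀ T ∈ F, S ⊂ T → (Eext inc S ∩ Eint inc T).Nonempty)
    (hext : ∀ S ∈ F, (Eext inc S).Nonempty) :
    ∀ S ∈ F, intScale inc n F S = intScale inc n (safeProj inc n F) S ∧
      extScale inc n F S = extScale inc n (safeProj inc n F) S := by
  intro S hS
  set P := safeProj inc n F with hP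
  have hPF : P ⊆ F := fun U hU => hU.1
  have hPfin : P.Finite := hFfin.subset hPF
  -- int part
  have hintsub : EintF inc F S ⊆ EintF inc P S := by
    rintro e ⟨he1, he2⟩
    refine ⟨he1, fun hmem => ?_⟩
    simp only [Set.mem_iUnion, exists_prop] at hmem
    obtain ⟨W, hW, heW⟩ := hmem
    obtain ⟨W', hW', hWW'⟩ := exists_child hFfin (hPF hW.1) hW.2.1
    exact he2 (by
      simp only [Set.mem_iUnion, exists_prop]
      exact ⟨W', hW', Eint_mono inc hWW' heW⟩)
  have hintbound : ∀ e ∈ EintF inc P S, intScale inc n F S ≤ n e := by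
    intro e heP
    by_cases hm : e ∈ EintF inc F S
    · exact Nat.sInf_le ⟨e, hm, rfl⟩
    · have hch : ∃ T ∈ childrenF F S, e ∈ Eint inc T := by
        by_contra h
        apply hm
        refine ⟨heP.1, fun hmem => ?_⟩
        simp only [Set.mem_iUnion, exists_prop] at hmem
        obtain ⟨T, h1, h2⟩ := hmem
        exact h ⟨T, h1, h2⟩
      obtain ⟨T, hT, heT⟩ := hch
      have hkey := claimI hFfin hlam hcross hext n
        ({U | U ∈ F ∧ U ⊆ T}).ncard T hT.1 le_rfl e heT ?_
      · have h2 : intScale inc n F S ≤ extScale inc n F T :=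
          int_le_ext hFfin hlam hcross hext hS hT
        omega
      · intro U hUF hUT heU hUP
        have hUS : U ⊂ S := (hUT.trans_ssubset hT.2.1)
        obtain ⟨W, hW, hUW⟩ := exists_child hPfin hUP hUS
        exact heP.2 (by
          simp only [Set.mem_iUnion, exists_prop]
          exact ⟨W, hW, Eint_mono inc hUW heU⟩)
  have hint : intScale inc n F S = intScale inc n P S := by
    rcases (EintF inc F S).eq_empty_or_nonempty with hemp | hne
    · have hPemp : EintF inc P S = ∅ := by
        rw [Set.eq_empty_iff_forall_notMem]
        intro e heP
        by_cases hm : e ∈ EintF inc F S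
        · rw [hemp] at hm; exact hm
        · have hch : ∃ T ∈ childrenF F S, e ∈ Eint inc T := by
            by_contra h
            apply hm
            refine ⟨heP.1, fun hmem => ?_⟩
            simp only [Set.mem_iUnion, exists_prop] at hmem
            obtain ⟨T, h1, h2⟩ := hmem
            exact h ⟨T, h1, h2⟩
          obtain ⟨T, hT, _⟩ := hch
          obtain ⟨f, hf⟩ := EintF_nonempty_of_child hlam hcross hS hT
          rw [hemp] at hf; exact hf
      rw [intScale, intScale, hemp, hPemp]
    · apply le_antisymm
      · have hne' : (n '' EintF inc P S).Nonempty := (hne.mono hintsub).image n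
        obtain ⟨e, heP, heq⟩ := Nat.sInf_mem hne'
        simp only [intScale]
        rw [← heq]
        exact hintbound e heP
      · obtain ⟨e, heF, heq⟩ := Nat.sInf_mem (hne.image n)
        have h1 : sInf (n '' EintF inc P S) ≤ n e :=
          Nat.sInf_le ⟨e, hintsub heF, rfl⟩
        exact h1.trans heq.le
  -- ext part
  have hextsub : EextF inc F S ⊆ EextF inc P S := by
    rintro e ⟨he1, he2⟩
    refine ⟨he1, ?_⟩
    rw [Set.mem_iInter₂]
    intro T hT
    exact Set.mem_iInter₂.mp he2 T ⟨hPF hT.1, hT.2⟩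
  have hextbound : ∀ e ∈ EextF inc P S, n e ≤ extScale inc n F S := by
    intro e heP
    by_cases hm : e ∈ EextF inc F S
    · exact le_csSup (bddAbove_scales _) ⟨e, hm, rfl⟩
    · have hanc : ∃ T₀ ∈ F, S ⊂ T₀ ∧ e ∉ Eint inc T₀ := by
        by_contra h
        push_neg at h
        apply hm
        refine ⟨heP.1, ?_⟩
        rw [Set.mem_iInter₂]
        intro U hUm
        exact h U hUm.1 hUm.2
      obtain ⟨T₀, hT₀, hST₀, heT₀⟩ := hanc
      obtain ⟨A, hA, hSA, hAmin⟩ :=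
        exists_minAncestor hFfin hlam (mem_nonempty hext hS) ⟨T₀, hT₀, hST₀⟩
      have heA : e ∉ Eint inc A := fun h => heT₀ (Eint_mono inc (hAmin T₀ hT₀ hST₀) h)
      have heAext : e ∈ Eext inc A := by
        refine ⟨heA, ?_⟩
        obtain ⟨v, hv⟩ := heP.1.2
        exact ⟨v, hv.1, hSA.subset hv.2⟩
      have hkey := claimII hFfin hlam hcross hext n
        ({U | U ∈ F ∧ A ⊆ U}).ncard A hA le_rfl e heAext ?_
      · have hSchild : S ∈ childrenF F A := by
          refine ⟨hS, hSA, fun W hW hSW hWA => ?_⟩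
          exact (hAmin W hW hSW).trans_ssubset hWA |>.ne rfl
        have h2 : intScale inc n F A ≤ extScale inc n F S :=
          int_le_ext hFfin hlam hcross hext hA hSchild
        omega
      · intro U hUF hAU heU hUP
        have heintU : e ∈ Eint inc U :=
          Set.mem_iInter₂.mp heP.2 U ⟨hUP, hSA.trans_subset hAU⟩
        exact heU.1 heintU
  have hext2 : extScale inc n F S = extScale inc n P S := by
    apply le_antisymm
    · apply csSup_le_csSup (bddAbove_scales _)
      · exact ((EextF_nonempty hFfin hlam hcross hext hS).image n)
      · exact Set.image_mono hextsub
    · apply csSup_le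
        (((EextF_nonempty hFfin hlam hcross hext hS).mono hextsub).image n)
      rintro x ⟨e, heP, rfl⟩
      exact hextbound e heP
  exact ⟨hint, hext2⟩
end

section
/- In the setting of the projection onto safe forests: for every scale assignment n, P^n is a forest projection. More precisely, if 𝒮 is a forest with P^n[𝒮] = 𝒮 and if one defines 𝒢 = {T ∈ Div : {T} ∪ 𝒮 is a forest and int^n_𝒮(T) > ext^n_𝒮(T)}, then 𝒢 ⊔ 𝒮 is again a forest, and (P^n)⁻¹[𝒮] is exactly the interval [𝒮, 𝒢 ⊔ 𝒮] = {ℱ : 𝒮 ⊆ ℱ ⊆ 𝒢 ⊔ 𝒮}. -/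
variable {V ε : Type*}

/-- A forest of divergent subtrees: a subset of `Div` whose members are pairwise
nested or disjoint. -/
def IsForestIn (Div : Set (Set V)) (F : Set (Set V)) : Prop :=
  F ⊆ Div ∧ ∀ S ∈ F, ∀ T ∈ F, S ⊆ T ∨ T ⊆ S ∨ S ∩ T = ∅

/-- `𝒢`: the divergent trees compatible with `𝒮` that are dangerous for the scale
assignment `n`, i.e. `int^n_𝒮(T) > ext^n_𝒮(T)`. -/
noncomputable def dangerousExt (inc : ε → Set V) (n : ε → ℕ) (Div : Set (Set V))
    (S : Set (Set V)) : Set (Set V) :=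
  {T ∈ Div | IsForestIn Div (insert T S) ∧ extScale inc n S T < intScale inc n S T}


namespace SafeForestProof

variable {inc : ε → Set V} {n : ε → ℕ} {Div : Set (Set V)}

/-- clean form of `EintF` for finite families -/
def EintS (inc : ε → Set V) (F : Set (Set V)) (S : Set V) : Set ε :=
  {e | inc e ⊆ S ∧ ∀ T ∈ F, T ⊂ S → ¬ inc e ⊆ T}

/-- clean form of `EextF` -/
def EextS (inc : ε → Set V) (F : Set (Set V)) (S : Set V) : Set ε :=
  {e | (¬ inc e ⊆ S ∧ (inc e ∩ S).Nonempty) ∧ ∀ T ∈ F, S ⊂ T → inc e ⊆ T}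

lemma biUnion_children {F : Set (Set V)} (hfin : F.Finite) (S : Set V) :
    ⋃ T ∈ childrenF F S, Eint inc T = ⋃ T ∈ {T | T ∈ F ∧ T ⊂ S}, Eint inc T := by
  apply Set.Subset.antisymm
  · exact Set.biUnion_mono (fun T hT => ⟨hT.1, hT.2.1⟩) (fun _ _ => subset_rfl)
  · rintro e he
    rw [Set.mem_iUnion₂] at he ⊢
    obtain ⟨T, ⟨hTF, hTS⟩, he⟩ := he
    obtain ⟨M, hM, hmax⟩ := Set.Finite.exists_maximalFor id {W | W ∈ F ∧ T ⊆ W ∧ W ⊂ S}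
      (hfin.subset fun W hW => hW.1) ⟨T, hTF, subset_rfl, hTS⟩
    refine ⟨M, ⟨hM.1, hM.2.2, fun W hW hMW hWS => ?_⟩, fun v hv => hM.2.1 (he hv)⟩
    exact hMW.2 (hmax ⟨hW, hM.2.1.trans hMW.subset, hWS⟩ hMW.subset)

lemma EintF_eq {F : Set (Set V)} (hfin : F.Finite) (S : Set V) :
    EintF inc F S = EintS inc F S := by
  rw [EintF, biUnion_children hfin]
  ext e
  simp only [EintS, Set.mem_diff, Set.mem_iUnion₂, Set.mem_setOf_eq, Eint, not_exists]
  constructor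
  · rintro ⟨h1, h2⟩
    exact ⟨h1, fun T hT hTS hle => h2 T ⟨hT, hTS⟩ hle⟩
  · rintro ⟨h1, h2⟩
    exact ⟨h1, fun T hT hle => h2 T hT.1 hT.2 hle⟩

lemma EextF_eq (F : Set (Set V)) (S : Set V) :
    EextF inc F S = EextS inc F S := by
  ext e
  simp only [EextF, EextS, Eext, Eint, Set.mem_inter_iff, Set.mem_iInter₂, Set.mem_setOf_eq,
    and_imp]
  try tauto

lemma intScale_eq {F : Set (Set V)} (hfin : F.Finite) (S : Set V) :
    intScale inc n F S = sInf (n '' EintS inc F S) := by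
  rw [intScale, EintF_eq hfin]

lemma extScale_eq (F : Set (Set V)) (S : Set V) :
    extScale inc n F S = sSup (n '' EextS inc F S) := by
  rw [extScale, EextF_eq]

lemma int_le {F : Set (Set V)} {S : Set V} {e : ε} (hfin : F.Finite)
    (he : e ∈ EintS inc F S) : intScale inc n F S ≤ n e := by
  rw [intScale_eq hfin]; exact Nat.sInf_le ⟨e, he, rfl⟩

lemma le_ext [Finite ε] {F : Set (Set V)} {S : Set V} {e : ε}
    (he : e ∈ EextS inc F S) : n e ≤ extScale inc n F S := by
  rw [extScale_eq]; exact le_csSup (Set.toFinite _).bddAbove ⟨e, he, rfl⟩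

lemma forest_mono {F G : Set (Set V)} (h : IsForestIn Div G) (hFG : F ⊆ G) :
    IsForestIn Div F :=
  ⟨hFG.trans h.1, fun S hS T hT => h.2 S (hFG hS) T (hFG hT)⟩

lemma sInf_eq_of_subset {A B : Set ℕ} (hA : A.Nonempty) (hAB : A ⊆ B)
    (h : ∀ x ∈ B, sInf A ≤ x) : sInf B = sInf A :=
  le_antisymm (Nat.sInf_le (hAB (Nat.sInf_mem hA))) (h _ (Nat.sInf_mem (hA.mono hAB)))

lemma sSup_eq_of_subset {A B : Set ℕ} (hA : A.Nonempty) (hAB : A ⊆ B) (hB : B.Finite)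
    (h : ∀ x ∈ B, x ≤ sSup A) : sSup B = sSup A :=
  le_antisymm (csSup_le (hA.mono hAB) h) (csSup_le_csSup hB.bddAbove hA hAB)

lemma oneStep [Finite ε]
    (hDivFin : Div.Finite)
    (hcross : ∀ S ∈ Div, ∀ T ∈ Div, S ⊂ T → (Eext inc S ∩ Eint inc T).Nonempty)
    (hne : ∀ S ∈ Div, S.Nonempty)
    {F : Set (Set V)} (hF : IsForestIn Div F) {U : Set V} (hU : U ∈ F)
    (hUns : extScale inc n F U < intScale inc n F U)
    {S : Set V} (hS : S ∈ Div) (hSU : S ≠ U)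
    (hSF : IsForestIn Div (insert S F)) :
    intScale inc n (F \ {U}) S = intScale inc n F S ∧
      extScale inc n (F \ {U}) S = extScale inc n F S := by
  have hfin : F.Finite := hDivFin.subset hF.1
  have hfin' : (F \ {U}).Finite := hfin.subset Set.diff_subset
  have hUD : U ∈ Div := hF.1 hU
  have hUne := hne U hUD
  have hSne := hne S hS
  have lam : ∀ A ∈ insert S F, ∀ B ∈ insert S F, A ⊆ B ∨ B ⊆ A ∨ A ∩ B = ∅ := hSF.2
  have memS : S ∈ insert S F := Set.mem_insert _ _
  have memF : ∀ {T : Set V}, T ∈ F → T ∈ insert S F := fun hT => Set.mem_insert_of_mem _ hT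
  have hub : sSup (n '' EextS inc F U) < sInf (n '' EintS inc F U) := by
    rw [← extScale_eq, ← intScale_eq hfin]; exact hUns
  rcases lam S memS U (memF hU) with hsu | hus | hdisj
  · -- S ⊊ U
    have hss : S ⊂ U := hsu.ssubset_of_ne hSU
    constructor
    · -- int : index sets coincide
      have hEq : EintS inc (F \ {U}) S = EintS inc F S := by
        ext e
        simp only [EintS, Set.mem_setOf_eq]
        constructor
        · rintro ⟨h1, h2⟩
          refine ⟨h1, fun T hT hTS => ?_⟩
          rcases eq_or_ne T U with rfl | hTU
          · exact absurd (hss.trans hTS) (ssubset_irrefl _)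
          · exact h2 T ⟨hT, hTU⟩ hTS
        · rintro ⟨h1, h2⟩
          exact ⟨h1, fun T hT hTS => h2 T hT.1 hTS⟩
      rw [intScale_eq hfin, intScale_eq hfin', hEq]
    · -- ext : the hard side
      rw [extScale_eq, extScale_eq]
      by_cases hW : ∃ W ∈ F, W ≠ U ∧ S ⊂ W ∧ W ⊂ U
      · obtain ⟨W, hWF, hWU, hSW, hWUs⟩ := hW
        have hEq : EextS inc (F \ {U}) S = EextS inc F S := by
          ext e
          simp only [EextS, Set.mem_setOf_eq]
          constructor
          · rintro ⟨h1, h2⟩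
            refine ⟨h1, fun T hT hST => ?_⟩
            rcases eq_or_ne T U with rfl | hTU
            · exact (h2 W ⟨hWF, hWU⟩ hSW).trans hWUs.subset
            · exact h2 T ⟨hT, hTU⟩ hST
          · rintro ⟨h1, h2⟩
            exact ⟨h1, fun T hT hST => h2 T hT.1 hST⟩
        rw [hEq]
      · push_neg at hW
        obtain ⟨f, hfE, hfU⟩ := hcross S hS U hUD hss
        have hfEs : ¬ inc f ⊆ S ∧ (inc f ∩ S).Nonempty := hfE
        have hfUi : inc f ⊆ U := hfU
        have hfIntU : f ∈ EintS inc F U := by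
          refine ⟨hfUi, fun T hT hTU hle => ?_⟩
          have hTSne : (T ∩ S).Nonempty := hfEs.2.mono (fun v hv => ⟨hle hv.1, hv.2⟩)
          rcases lam T (memF hT) S memS with h | h | h
          · exact hfEs.1 (hle.trans h)
          · rcases eq_or_ne S T with rfl | hST
            · exact hfEs.1 hle
            · exact hW T hT (ne_of_ssubset hTU) (h.ssubset_of_ne hST) hTU
          · exact hTSne.ne_empty h
        have hfExtS : f ∈ EextS inc F S := by
          refine ⟨hfEs, fun T hT hST => ?_⟩
          have hTUne : (T ∩ U).Nonempty := hSne.mono (Set.subset_inter hST.subset hsu)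
          rcases lam T (memF hT) U (memF hU) with h | h | h
          · rcases eq_or_ne T U with rfl | hTU'
            · exact hfUi
            · exact absurd (h.ssubset_of_ne hTU') (hW T hT hTU' hST)
          · exact hfUi.trans h
          · exact absurd h hTUne.ne_empty
        have hAB : EextS inc F S ⊆ EextS inc (F \ {U}) S :=
          fun e he => ⟨he.1, fun T hT => he.2 T hT.1⟩
        have hbound : ∀ e ∈ EextS inc (F \ {U}) S, n e ≤ sSup (n '' EextS inc F S) := by
          intro e he
          by_cases heA : e ∈ EextS inc F S
          · exact le_csSup (Set.toFinite _).bddAbove ⟨e, heA, rfl⟩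
          · obtain ⟨he1, he2⟩ := he
            have hnotU : ¬ inc e ⊆ U := by
              intro hcon
              refine heA ⟨he1, fun T hT hST => ?_⟩
              rcases eq_or_ne T U with rfl | hTU
              · exact hcon
              · exact he2 T ⟨hT, hTU⟩ hST
            have heU : e ∈ EextS inc F U :=
              ⟨⟨hnotU, he1.2.mono (fun v hv => ⟨hv.1, hsu hv.2⟩)⟩,
                fun T hT hUT => he2 T ⟨hT, (ne_of_ssubset hUT).symm⟩ (hss.trans hUT)⟩
            have h1' : n e ≤ sSup (n '' EextS inc F U) :=
              le_csSup (Set.toFinite _).bddAbove ⟨e, heU, rfl⟩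
            have h2' : sInf (n '' EintS inc F U) ≤ n f := Nat.sInf_le ⟨f, hfIntU, rfl⟩
            have h3' : n f ≤ sSup (n '' EextS inc F S) :=
              le_csSup (Set.toFinite _).bddAbove ⟨f, hfExtS, rfl⟩
            omega
        exact sSup_eq_of_subset ⟨n f, f, hfExtS, rfl⟩ (Set.image_mono hAB)
          (Set.toFinite _) (by rintro x ⟨e, he, rfl⟩; exact hbound e he)
  · -- U ⊊ S
    have hss : U ⊂ S := hus.ssubset_of_ne (Ne.symm hSU)
    constructor
    · -- int : the hard side
      rw [intScale_eq hfin, intScale_eq hfin']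
      by_cases hW : ∃ W ∈ F, W ≠ U ∧ U ⊂ W ∧ W ⊂ S
      · obtain ⟨W, hWF, hWU, hUW, hWS⟩ := hW
        have hEq : EintS inc (F \ {U}) S = EintS inc F S := by
          ext e
          simp only [EintS, Set.mem_setOf_eq]
          constructor
          · rintro ⟨h1, h2⟩
            refine ⟨h1, fun T hT hTS hle => ?_⟩
            rcases eq_or_ne T U with rfl | hTU
            · exact h2 W ⟨hWF, hWU⟩ hWS (hle.trans hUW.subset)
            · exact h2 T ⟨hT, hTU⟩ hTS hle
          · rintro ⟨h1, h2⟩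
            exact ⟨h1, fun T hT hTS => h2 T hT.1 hTS⟩
        rw [hEq]
      · push_neg at hW
        obtain ⟨f, hfE, hfU⟩ := hcross U hUD S hS hss
        have hfEs : ¬ inc f ⊆ U ∧ (inc f ∩ U).Nonempty := hfE
        have hfSi : inc f ⊆ S := hfU
        have hfIntS : f ∈ EintS inc F S := by
          refine ⟨hfSi, fun T hT hTS hle => ?_⟩
          have hTUne : (T ∩ U).Nonempty := hfEs.2.mono (fun v hv => ⟨hle hv.1, hv.2⟩)
          rcases lam T (memF hT) U (memF hU) with h | h | h
          · exact hfEs.1 (hle.trans h)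
          · rcases eq_or_ne T U with rfl | hTU'
            · exact hfEs.1 hle
            · exact hW T hT hTU' (h.ssubset_of_ne (Ne.symm hTU')) hTS
          · exact hTUne.ne_empty h
        have hfExtU : f ∈ EextS inc F U := by
          refine ⟨hfEs, fun T hT hUT => ?_⟩
          have hTSne : (T ∩ S).Nonempty := hUne.mono (Set.subset_inter hUT.subset hus)
          rcases lam T (memF hT) S memS with h | h | h
          · rcases eq_or_ne T S with rfl | hTS''
            · exact hfSi
            · exact absurd (h.ssubset_of_ne hTS'')
                (hW T hT (Ne.symm (ne_of_ssubset hUT)) hUT)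
          · exact hfSi.trans h
          · exact absurd h hTSne.ne_empty
        have hAB : EintS inc F S ⊆ EintS inc (F \ {U}) S :=
          fun e he => ⟨he.1, fun T hT => he.2 T hT.1⟩
        have hbound : ∀ e ∈ EintS inc (F \ {U}) S, sInf (n '' EintS inc F S) ≤ n e := by
          intro e he
          by_cases heA : e ∈ EintS inc F S
          · exact Nat.sInf_le ⟨e, heA, rfl⟩
          · obtain ⟨he1, he2⟩ := he
            have heU : inc e ⊆ U := by
              by_contra hcon
              refine heA ⟨he1, fun T hT hTS => ?_⟩
              rcases eq_or_ne T U with rfl | hTU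
              · exact hcon
              · exact he2 T ⟨hT, hTU⟩ hTS
            have heIntU : e ∈ EintS inc F U :=
              ⟨heU, fun T hT hTU hle => he2 T ⟨hT, ne_of_ssubset hTU⟩ (hTU.trans hss) hle⟩
            have h1' : sInf (n '' EintS inc F S) ≤ n f := Nat.sInf_le ⟨f, hfIntS, rfl⟩
            have h2' : n f ≤ sSup (n '' EextS inc F U) :=
              le_csSup (Set.toFinite _).bddAbove ⟨f, hfExtU, rfl⟩
            have h3' : sInf (n '' EintS inc F U) ≤ n e := Nat.sInf_le ⟨e, heIntU, rfl⟩
            omega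
        exact sInf_eq_of_subset ⟨n f, f, hfIntS, rfl⟩ (Set.image_mono hAB)
          (by rintro x ⟨e, he, rfl⟩; exact hbound e he)
    · -- ext : index sets coincide
      have hEq : EextS inc (F \ {U}) S = EextS inc F S := by
        ext e
        simp only [EextS, Set.mem_setOf_eq]
        constructor
        · rintro ⟨h1, h2⟩
          refine ⟨h1, fun T hT hST => ?_⟩
          rcases eq_or_ne T U with rfl | hTU
          · exact absurd (hss.trans hST) (ssubset_irrefl _)
          · exact h2 T ⟨hT, hTU⟩ hST
        · rintro ⟨h1, h2⟩
          exact ⟨h1, fun T hT hST => h2 T hT.1 hST⟩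
      rw [extScale_eq, extScale_eq, hEq]
  · -- disjoint
    have hnsu : ¬ S ⊆ U := fun h =>
      hSne.ne_empty (Set.subset_empty_iff.mp (hdisj ▸ Set.subset_inter subset_rfl h))
    have hnus : ¬ U ⊆ S := fun h =>
      hUne.ne_empty (Set.subset_empty_iff.mp (hdisj ▸ Set.subset_inter h subset_rfl))
    constructor
    · have hEq : EintS inc (F \ {U}) S = EintS inc F S := by
        ext e
        simp only [EintS, Set.mem_setOf_eq]
        constructor
        · rintro ⟨h1, h2⟩
          refine ⟨h1, fun T hT hTS => ?_⟩
          rcases eq_or_ne T U with rfl | hTU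
          · exact absurd hTS.subset hnus
          · exact h2 T ⟨hT, hTU⟩ hTS
        · rintro ⟨h1, h2⟩
          exact ⟨h1, fun T hT hTS => h2 T hT.1 hTS⟩
      rw [intScale_eq hfin, intScale_eq hfin', hEq]
    · have hEq : EextS inc (F \ {U}) S = EextS inc F S := by
        ext e
        simp only [EextS, Set.mem_setOf_eq]
        constructor
        · rintro ⟨h1, h2⟩
          refine ⟨h1, fun T hT hST => ?_⟩
          rcases eq_or_ne T U with rfl | hTU
          · exact absurd hST.subset hnsu
          · exact h2 T ⟨hT, hTU⟩ hST
        · rintro ⟨h1, h2⟩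
          exact ⟨h1, fun T hT hST => h2 T hT.1 hST⟩
      rw [extScale_eq, extScale_eq, hEq]

lemma scale_diff_self {F : Set (Set V)} (hfinF : F.Finite) (U : Set V) :
    intScale inc n (F \ {U}) U = intScale inc n F U ∧
      extScale inc n (F \ {U}) U = extScale inc n F U := by
  have hfin' : (F \ {U}).Finite := hfinF.subset Set.diff_subset
  constructor
  · have hEq : EintS inc (F \ {U}) U = EintS inc F U := by
      ext e
      simp only [EintS, Set.mem_setOf_eq]
      constructor
      · rintro ⟨h1, h2⟩
        refine ⟨h1, fun T hT hTU => ?_⟩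
        rcases eq_or_ne T U with rfl | hne'
        · exact absurd hTU (ssubset_irrefl _)
        · exact h2 T ⟨hT, hne'⟩ hTU
      · rintro ⟨h1, h2⟩
        exact ⟨h1, fun T hT hTU => h2 T hT.1 hTU⟩
    rw [intScale_eq hfinF, intScale_eq hfin', hEq]
  · have hEq : EextS inc (F \ {U}) U = EextS inc F U := by
      ext e
      simp only [EextS, Set.mem_setOf_eq]
      constructor
      · rintro ⟨h1, h2⟩
        refine ⟨h1, fun T hT hUT => ?_⟩
        rcases eq_or_ne T U with rfl | hne'
        · exact absurd hUT (ssubset_irrefl _)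
        · exact h2 T ⟨hT, hne'⟩ hUT
      · rintro ⟨h1, h2⟩
        exact ⟨h1, fun T hT hUT => h2 T hT.1 hUT⟩
    rw [extScale_eq, extScale_eq, hEq]

lemma stable1 [Finite ε]
    (hDivFin : Div.Finite)
    (hcross : ∀ S ∈ Div, ∀ T ∈ Div, S ⊂ T → (Eext inc S ∩ Eint inc T).Nonempty)
    (hne : ∀ S ∈ Div, S.Nonempty) {𝒮 : Set (Set V)} :
    ∀ k : ℕ, ∀ F : Set (Set V), (F \ 𝒮).ncard ≤ k →
      IsForestIn Div F → 𝒮 ⊆ F →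
      (∀ U ∈ F, U ∉ 𝒮 → extScale inc n F U < intScale inc n F U) →
      ∀ S ∈ Div, IsForestIn Div (insert S F) →
        intScale inc n F S = intScale inc n 𝒮 S ∧
          extScale inc n F S = extScale inc n 𝒮 S := by
  intro k
  induction k with
  | zero =>
    intro F hcard hF h𝒮F _ S _ _
    have hd : F \ 𝒮 = ∅ :=
      (Set.ncard_eq_zero (hDivFin.subset hF.1).diff).mp (Nat.le_zero.mp hcard)
    have hF𝒮 : F = 𝒮 := Set.Subset.antisymm (Set.diff_eq_empty.mp hd) h𝒮F
    rw [hF𝒮]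
    exact ⟨rfl, rfl⟩
  | succ k ih =>
    intro F hcard hF h𝒮F hyp S hS hSF
    by_cases hFS : F ⊆ 𝒮
    · have hF𝒮 : F = 𝒮 := Set.Subset.antisymm hFS h𝒮F
      rw [hF𝒮]; exact ⟨rfl, rfl⟩
    · obtain ⟨U, hUF, hU𝒮⟩ := Set.not_subset.mp hFS
      have hfinF : F.Finite := hDivFin.subset hF.1
      have hUns : extScale inc n F U < intScale inc n F U := hyp U hUF hU𝒮
      have hF'sub : F \ {U} ⊆ F := Set.diff_subset
      have hforest' : IsForestIn Div (F \ {U}) := forest_mono hF hF'sub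
      have h𝒮F' : 𝒮 ⊆ F \ {U} := fun T hT =>
        ⟨h𝒮F hT, fun hc => hU𝒮 (Set.mem_singleton_iff.mp hc ▸ hT)⟩
      have hcard' : ((F \ {U}) \ 𝒮).ncard ≤ k := by
        have h1 : (F \ {U}) \ 𝒮 = (F \ 𝒮) \ {U} := Set.diff_diff_comm
        have h2 : ((F \ 𝒮) \ {U}).ncard < (F \ 𝒮).ncard :=
          Set.ncard_diff_singleton_lt_of_mem ⟨hUF, hU𝒮⟩ hfinF.diff
        rw [h1]; omega
      have hInsF : ∀ T ∈ F, IsForestIn Div (insert T F) := fun T hT => by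
        rwa [Set.insert_eq_of_mem hT]
      have hyp' : ∀ U' ∈ F \ {U}, U' ∉ 𝒮 →
          extScale inc n (F \ {U}) U' < intScale inc n (F \ {U}) U' := by
        intro U' hU'F' hU'𝒮
        have hne' : U' ≠ U := fun hc => hU'F'.2 (Set.mem_singleton_iff.mpr hc)
        have hstep := oneStep hDivFin hcross hne hF hUF hUns (hF.1 hU'F'.1) hne'
          (hInsF U' hU'F'.1)
        rw [hstep.1, hstep.2]
        exact hyp U' hU'F'.1 hU'𝒮
      rcases eq_or_ne S U with rfl | hSne'
      · have hself := scale_diff_self (inc := inc) (n := n) hfinF S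
        have hrec := ih (F \ {S}) hcard' hforest' h𝒮F' hyp' S hS
          (by rw [Set.insert_diff_singleton, Set.insert_eq_of_mem hUF]; exact hF)
        exact ⟨hself.1.symm.trans hrec.1, hself.2.symm.trans hrec.2⟩
      · have hstep := oneStep hDivFin hcross hne hF hUF hUns hS hSne' hSF
        have hSF' : IsForestIn Div (insert S (F \ {U})) :=
          forest_mono hSF (Set.insert_subset_insert hF'sub)
        have hrec := ih (F \ {U}) hcard' hforest' h𝒮F' hyp' S hS hSF'
        exact ⟨hstep.1.symm.trans hrec.1, hstep.2.symm.trans hrec.2⟩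

lemma stable2 [Finite ε]
    (hDivFin : Div.Finite)
    (hcross : ∀ S ∈ Div, ∀ T ∈ Div, S ⊂ T → (Eext inc S ∩ Eint inc T).Nonempty)
    (hne : ∀ S ∈ Div, S.Nonempty) {𝒮 : Set (Set V)} :
    ∀ k : ℕ, ∀ F : Set (Set V), (F \ 𝒮).ncard ≤ k →
      IsForestIn Div F → 𝒮 ⊆ F →
      (∀ U ∈ F, U ∉ 𝒮 → extScale inc n 𝒮 U < intScale inc n 𝒮 U) →
      ∀ S ∈ Div, IsForestIn Div (insert S F) →
        intScale inc n F S = intScale inc n 𝒮 S ∧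
          extScale inc n F S = extScale inc n 𝒮 S := by
  intro k
  induction k with
  | zero =>
    intro F hcard hF h𝒮F _ S _ _
    have hd : F \ 𝒮 = ∅ :=
      (Set.ncard_eq_zero (hDivFin.subset hF.1).diff).mp (Nat.le_zero.mp hcard)
    have hF𝒮 : F = 𝒮 := Set.Subset.antisymm (Set.diff_eq_empty.mp hd) h𝒮F
    rw [hF𝒮]
    exact ⟨rfl, rfl⟩
  | succ k ih =>
    intro F hcard hF h𝒮F hyp S hS hSF
    by_cases hFS : F ⊆ 𝒮
    · have hF𝒮 : F = 𝒮 := Set.Subset.antisymm hFS h𝒮F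
      rw [hF𝒮]; exact ⟨rfl, rfl⟩
    · obtain ⟨U, hUF, hU𝒮⟩ := Set.not_subset.mp hFS
      have hfinF : F.Finite := hDivFin.subset hF.1
      have hF'sub : F \ {U} ⊆ F := Set.diff_subset
      have hforest' : IsForestIn Div (F \ {U}) := forest_mono hF hF'sub
      have h𝒮F' : 𝒮 ⊆ F \ {U} := fun T hT =>
        ⟨h𝒮F hT, fun hc => hU𝒮 (Set.mem_singleton_iff.mp hc ▸ hT)⟩
      have hcard' : ((F \ {U}) \ 𝒮).ncard ≤ k := by
        have h1 : (F \ {U}) \ 𝒮 = (F \ 𝒮) \ {U} := Set.diff_diff_comm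
        have h2 : ((F \ 𝒮) \ {U}).ncard < (F \ 𝒮).ncard :=
          Set.ncard_diff_singleton_lt_of_mem ⟨hUF, hU𝒮⟩ hfinF.diff
        rw [h1]; omega
      have hInsF : ∀ T ∈ F, IsForestIn Div (insert T F) := fun T hT => by
        rwa [Set.insert_eq_of_mem hT]
      have hyp' : ∀ U' ∈ F \ {U}, U' ∉ 𝒮 →
          extScale inc n 𝒮 U' < intScale inc n 𝒮 U' :=
        fun U' hU' h2 => hyp U' hU'.1 h2
      -- derive unsafety of U w.r.t. F via the induction hypothesis
      have hinsU : IsForestIn Div (insert U (F \ {U})) := by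
        rw [Set.insert_diff_singleton, Set.insert_eq_of_mem hUF]; exact hF
      have hrecU := ih (F \ {U}) hcard' hforest' h𝒮F' hyp' U (hF.1 hUF) hinsU
      have hself := scale_diff_self (inc := inc) (n := n) hfinF U
      have hUns : extScale inc n F U < intScale inc n F U := by
        rw [← hself.1, ← hself.2, hrecU.1, hrecU.2]
        exact hyp U hUF hU𝒮
      rcases eq_or_ne S U with rfl | hSne'
      · exact ⟨hself.1.symm.trans hrecU.1, hself.2.symm.trans hrecU.2⟩
      · have hstep := oneStep hDivFin hcross hne hF hUF hUns hS hSne' hSF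
        have hSF' : IsForestIn Div (insert S (F \ {U})) :=
          forest_mono hSF (Set.insert_subset_insert hF'sub)
        have hrec := ih (F \ {U}) hcard' hforest' h𝒮F' hyp' S hS hSF'
        exact ⟨hstep.1.symm.trans hrec.1, hstep.2.symm.trans hrec.2⟩

lemma upgrade {𝒮 : Set (Set V)} {A B : Set V} {e : ε}
    (hA : IsForestIn Div (insert A 𝒮)) (hB : IsForestIn Div (insert B 𝒮))
    (hIA : e ∈ Eint inc A) (hEB : e ∈ Eext inc B)
    (dBA : (B \ A).Nonempty) (dI : (A ∩ B).Nonempty) :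
    e ∈ EintS inc 𝒮 A ∧ e ∈ EextS inc 𝒮 B := by
  have hIA' : inc e ⊆ A := hIA
  have hEB' : ¬ inc e ⊆ B ∧ (inc e ∩ B).Nonempty := hEB
  constructor
  · refine ⟨hIA', fun T hT hTA hle => ?_⟩
    have hTB : (T ∩ B).Nonempty := hEB'.2.mono (fun v hv => ⟨hle hv.1, hv.2⟩)
    rcases hB.2 T (Set.mem_insert_of_mem _ hT) B (Set.mem_insert _ _) with h | h | h
    · exact hEB'.1 (hle.trans h)
    · obtain ⟨v, hv⟩ := dBA
      exact hv.2 (hTA.subset (h hv.1))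
    · exact hTB.ne_empty h
  · refine ⟨hEB', fun T hT hBT => ?_⟩
    rcases hA.2 T (Set.mem_insert_of_mem _ hT) A (Set.mem_insert _ _) with h | h | h
    · obtain ⟨v, hv⟩ := dBA
      exact absurd (h (hBT.subset hv.1)) hv.2
    · exact hIA'.trans h
    · obtain ⟨v, hv⟩ := dI
      exact absurd h (Set.nonempty_iff_ne_empty.mp ⟨v, hBT.subset hv.2, hv.1⟩)

end SafeForestProof

open SafeForestProof in
theorem safeProj_is_forest_projection [Finite ε] (inc : ε → Set V) (n : ε → ℕ)
    (Div : Set (Set V)) (hDivFin : Div.Finite)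
    (hcross : ∀ S ∈ Div, ∀ T ∈ Div, S ⊂ T → (Eext inc S ∩ Eint inc T).Nonempty)
    (hext : ∀ S ∈ Div, (Eext inc S).Nonempty)
    (hover : ∀ S ∈ Div, ∀ T ∈ Div, (S \ T).Nonempty → (T \ S).Nonempty →
      (S ∩ T).Nonempty → (Eint inc S ∩ Eext inc T).Nonempty)
    (𝒮 : Set (Set V)) (h𝒮 : IsForestIn Div 𝒮) (hfix : safeProj inc n 𝒮 = 𝒮) :
    IsForestIn Div (dangerousExt inc n Div 𝒮 ∪ 𝒮) ∧
      ∀ F : Set (Set V),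
        (IsForestIn Div F ∧ safeProj inc n F = 𝒮) ↔
          (IsForestIn Div F ∧ 𝒮 ⊆ F ∧ F ⊆ dangerousExt inc n Div 𝒮 ∪ 𝒮) := by
  classical
  have hne : ∀ S ∈ Div, S.Nonempty := by
    intro S hS
    obtain ⟨e, he⟩ := hext S hS
    exact he.2.mono Set.inter_subset_right
  have h𝒮fin : 𝒮.Finite := hDivFin.subset h𝒮.1
  constructor
  · -- part 1 : 𝒢 ∪ 𝒮 is a forest
    constructor
    · rintro T (hT | hT)
      exacts [hT.1, h𝒮.1 hT]
    · intro A hA B hB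
      rcases hA with hA | hA
      · rcases hB with hB | hB
        · -- both dangerous
          by_contra hcon
          push_neg at hcon
          obtain ⟨hAB, hBA, hABne⟩ := hcon
          have d1 : (A \ B).Nonempty := Set.diff_nonempty.mpr hAB
          have d2 : (B \ A).Nonempty := Set.diff_nonempty.mpr hBA
          have dI : (A ∩ B).Nonempty := hABne
          obtain ⟨e₁, he₁A, he₁B⟩ := hover A hA.1 B hB.1 d1 d2 dI
          obtain ⟨e₂, he₂B, he₂A⟩ := hover B hB.1 A hA.1 d2 d1
            (by rwa [Set.inter_comm] at dI)
          have hup1 := upgrade hA.2.1 hB.2.1 he₁A he₁B d2 dI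
          have hup2 := upgrade hB.2.1 hA.2.1 he₂B he₂A d1
            (by rwa [Set.inter_comm] at dI)
          have c1 : intScale inc n 𝒮 A ≤ n e₁ := int_le h𝒮fin hup1.1
          have c2 : n e₁ ≤ extScale inc n 𝒮 B := le_ext hup1.2
          have c3 : extScale inc n 𝒮 B < intScale inc n 𝒮 B := hB.2.2
          have c4 : intScale inc n 𝒮 B ≤ n e₂ := int_le h𝒮fin hup2.1
          have c5 : n e₂ ≤ extScale inc n 𝒮 A := le_ext hup2.2
          have c6 : extScale inc n 𝒮 A < intScale inc n 𝒮 A := hA.2.2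
          omega
        · exact hA.2.1.2 A (Set.mem_insert _ _) B (Set.mem_insert_of_mem _ hB)
      · rcases hB with hB | hB
        · exact hB.2.1.2 A (Set.mem_insert_of_mem _ hA) B (Set.mem_insert _ _)
        · exact h𝒮.2 A hA B hB
  · -- part 2 : the preimage characterization
    intro F
    constructor
    · rintro ⟨hFf, hproj⟩
      have h𝒮F : 𝒮 ⊆ F := by
        rw [← hproj]; exact fun S hS => hS.1
      refine ⟨hFf, h𝒮F, ?_⟩
      intro T hTF
      by_cases hT𝒮 : T ∈ 𝒮
      · exact Or.inr hT𝒮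
      · left
        have hyp : ∀ U ∈ F, U ∉ 𝒮 → extScale inc n F U < intScale inc n F U := by
          intro U hU hU'
          have hns : U ∉ safeProj inc n F := by rw [hproj]; exact hU'
          have : ¬ intScale inc n F U ≤ extScale inc n F U := fun hc => hns ⟨hU, hc⟩
          omega
        have hres := stable1 hDivFin hcross hne (F \ 𝒮).ncard F le_rfl hFf h𝒮F hyp
          T (hFf.1 hTF) (by rw [Set.insert_eq_of_mem hTF]; exact hFf)
        refine ⟨hFf.1 hTF, ?_, ?_⟩
        · exact forest_mono hFf (Set.insert_subset hTF h𝒮F)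
        · rw [← hres.1, ← hres.2]
          exact hyp T hTF hT𝒮
    · rintro ⟨hFf, h𝒮F, hF𝒢⟩
      refine ⟨hFf, ?_⟩
      have hyp2 : ∀ U ∈ F, U ∉ 𝒮 → extScale inc n 𝒮 U < intScale inc n 𝒮 U := by
        intro U hU hU'
        rcases hF𝒢 hU with h | h
        · exact h.2.2
        · exact absurd h hU'
      have hres : ∀ S ∈ F,
          intScale inc n F S = intScale inc n 𝒮 S ∧
            extScale inc n F S = extScale inc n 𝒮 S := by
        intro S hSF
        exact stable2 hDivFin hcross hne (F \ 𝒮).ncard F le_rfl hFf h𝒮F hyp2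
          S (hFf.1 hSF) (by rw [Set.insert_eq_of_mem hSF]; exact hFf)
      ext S
      constructor
      · rintro ⟨hSF', hle⟩
        by_contra hS𝒮
        have hr := hres S hSF'
        rw [hr.1, hr.2] at hle
        have := hyp2 S hSF' hS𝒮
        omega
      · intro hS𝒮
        have hSF' : S ∈ F := h𝒮F hS𝒮
        have hr := hres S hSF'
        refine ⟨hSF', ?_⟩
        rw [hr.1, hr.2]
        have hmem : S ∈ safeProj inc n 𝒮 := by rw [hfix]; exact hS𝒮
        exact hmem.2
end

section
/- Decomposition of cut-set families: fixing a forest ℱ and a depth-≤1 cut set 𝒞 ⊆ 𝔠_ℱ, one has the disjoint-union identity ⊔_{𝒟 ∈ 𝔠_<[𝒞,ℱ]} ⊔_{ℰ ∈ 𝔠[𝒟,ℱ]} {𝒞 ⊔ ℰ} = 𝔠[𝒞,ℱ], where 𝔠[𝒞,ℱ] = {𝒟 ⊆ 𝔠_ℱ : Min(𝒟) = 𝒞} and 𝔠_<[𝒞,ℱ] = {𝒟 ⊆ 𝔠_ℱ of depth ≤ 1 : every e ∈ 𝒟 has some e' ∈ 𝒞 with e' < e}. -/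
open scoped Classical

variable {α : Type*}

/-- The minimal elements of a finite subset of a poset. -/
noncomputable def minElems [Preorder α] (C : Finset α) : Finset α :=
  C.filter fun e => ∀ f ∈ C, ¬ f < e

lemma exists_minElems_le [PartialOrder α] (S : Finset α) {e : α} (he : e ∈ S) :
    ∃ m ∈ minElems S, m ≤ e := by
  obtain ⟨m, hm, hmin⟩ := (S.filter (· ≤ e)).exists_minimal ⟨e, by simp [he]⟩
  simp only [Finset.mem_filter] at hm
  refine ⟨m, ?_, hm.2⟩
  simp only [minElems, Finset.mem_filter]
  exact ⟨hm.1, fun f hf hlt => lt_irrefl f (lt_of_lt_of_le hlt (hmin (Finset.mem_filter.mpr ⟨hf, hlt.le.trans hm.2⟩) hlt.le))⟩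

lemma key_lemma [PartialOrder α] {C D E : Finset α}
    (hDC : ∀ e ∈ D, ∃ c ∈ C, c < e) (hEmin : minElems E = D) :
    ∀ e ∈ E, ∃ c ∈ C, c < e := by
  intro e he
  obtain ⟨m, hm, hme⟩ := exists_minElems_le E he
  rw [hEmin] at hm
  obtain ⟨c, hc, hcm⟩ := hDC m hm
  exact ⟨c, hc, lt_of_lt_of_le hcm hme⟩

/-- decomposition of cut-set families. Fix a set `A` of available
cut edges of a rooted tree (a poset in which the set of elements below any given
element is a chain) and a depth-`≤ 1` cut set `𝒞 ⊆ A` (i.e. `Min 𝒞 = 𝒞`).  Then: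
for every depth-`≤ 1` cut set `𝒟 ⊆ A` lying strictly above `𝒞` and every cut set
`ℰ ⊆ A` with `Min ℰ = 𝒟`, the union `𝒞 ⊔ ℰ` is a disjoint union and lies in
`𝔠[𝒞] = {𝒳 ⊆ A : Min 𝒳 = 𝒞}`; and conversely, every `𝒳 ∈ 𝔠[𝒞]` arises in this
way from a unique pair `(𝒟, ℰ)`.  In other words,
`⊔_{𝒟 ∈ 𝔠_<[𝒞]} ⊔_{ℰ ∈ 𝔠[𝒟]} {𝒞 ⊔ ℰ} = 𝔠[𝒞]`. -/
theorem cutset_decomposition [PartialOrder α]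
    (htree : ∀ e : α, IsChain (· ≤ ·) {f : α | f ≤ e})
    (A C : Finset α) (hCA : C ⊆ A) (hCdepth : minElems C = C) :
    (∀ D E : Finset α,
        (D ⊆ A ∧ minElems D = D ∧ ∀ e ∈ D, ∃ e' ∈ C, e' < e) →
        (E ⊆ A ∧ minElems E = D) →
        Disjoint C E ∧ C ∪ E ⊆ A ∧ minElems (C ∪ E) = C) ∧
      ∀ X : Finset α, X ⊆ A → minElems X = C →
        ∃! p : Finset α × Finset α,
          (p.1 ⊆ A ∧ minElems p.1 = p.1 ∧ ∀ e ∈ p.1, ∃ e' ∈ C, e' < e) ∧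
          (p.2 ⊆ A ∧ minElems p.2 = p.1) ∧ X = C ∪ p.2 := by
  have hCanti : ∀ x ∈ C, ∀ f ∈ C, ¬ f < x := by
    intro x hx
    have hx' : x ∈ minElems C := by rw [hCdepth]; exact hx
    exact (Finset.mem_filter.mp hx').2
  have hdisj : ∀ E : Finset α, (∀ e ∈ E, ∃ c ∈ C, c < e) → Disjoint C E := by
    intro E key
    rw [Finset.disjoint_left]
    intro x hxC hxE
    obtain ⟨c, hc, hcx⟩ := key x hxE
    exact hCanti x hxC c hc hcx
  constructor
  · rintro D E ⟨hDA, hDmin, hDC⟩ ⟨hEA, hEmin⟩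
    have key : ∀ e ∈ E, ∃ c ∈ C, c < e := key_lemma hDC hEmin
    refine ⟨hdisj E key, Finset.union_subset hCA hEA, ?_⟩
    ext x
    simp only [minElems, Finset.mem_filter, Finset.mem_union]
    constructor
    · rintro ⟨hx | hx, hmin⟩
      · exact hx
      · obtain ⟨c, hc, hcx⟩ := key x hx
        exact absurd hcx (hmin c (Or.inl hc))
    · intro hx
      refine ⟨Or.inl hx, ?_⟩
      rintro f (hf | hf) hlt
      · exact hCanti x hx f hf hlt
      · obtain ⟨c, hc, hcf⟩ := key f hf
        exact hCanti x hx c hc (hcf.trans hlt)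
  · intro X hXA hXmin
    have hCX : C ⊆ X := by rw [← hXmin]; exact Finset.filter_subset _ _
    set E : Finset α := X \ C with hE
    set D : Finset α := minElems E with hD
    have hEX : E ⊆ X := Finset.sdiff_subset
    have hDE : D ⊆ E := Finset.filter_subset _ _
    have hXeq : X = C ∪ E := by rw [hE, Finset.union_sdiff_of_subset hCX]
    have hDC : ∀ e ∈ D, ∃ c ∈ C, c < e := by
      intro e he
      have heE : e ∈ E := hDE he
      have heX : e ∈ X := hEX heE
      have heC : e ∉ C := (Finset.mem_sdiff.mp heE).2
      obtain ⟨m, hm, hme⟩ := exists_minElems_le X heX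
      rw [hXmin] at hm
      exact ⟨m, hm, lt_of_le_of_ne hme (fun h => heC (h ▸ hm))⟩
    have hDD : minElems D = D := by
      rw [minElems, Finset.filter_eq_self]
      intro x hx f hf
      exact (Finset.mem_filter.mp hx).2 f (hDE hf)
    refine ⟨(D, E), ⟨⟨hDE.trans (hEX.trans hXA), hDD, hDC⟩,
      ⟨hEX.trans hXA, hD.symm⟩, hXeq⟩, ?_⟩
    rintro ⟨D', E'⟩ ⟨⟨hD'A, hD'min, hD'C⟩, ⟨hE'A, hE'min⟩, hXeq'⟩
    have key' : ∀ e ∈ E', ∃ c ∈ C, c < e := key_lemma hD'C hE'min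
    have hE'eq : E' = E := by
      rw [hE, hXeq', Finset.union_sdiff_cancel_left (hdisj E' key')]
    have hD'eq : D' = D := by rw [hD, ← hE'eq]; exact hE'min.symm
    simp [hE'eq, hD'eq]
end
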